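/- Let N ≥ 4 be an integer, Δθ = 2π/N, and let indices i be taken modulo N. Let g_i > 0 be constants and let L : I → (ZMod N → ℝ) be differentiable on an interval I with L_i(t) > 0 for all i and t. Define ω_i(t) = 2·tan(Δθ/2)·g_i / L_i(t), and suppose the side lengths satisfy L̇_i = 2·cot(Δθ)·ω_i - csc(Δθ)·(ω_{i+1} + ω_{i-1}) for all i and t. Then the weighted curvatures satisfy ω̇_i = (1/g_i)·[ω_i²·(ω_{i+1} - 2ω_i + ω_{i-1})/(2·(1 - cos Δθ)) + ω_i³] for all i and t. -/

import Mathlib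

open Real

/-- If the side lengths of the crystalline polygon evolve by
`L̇ᵢ = 2 cot(Δθ) ωᵢ - csc(Δθ)(ω_{i+1} + ω_{i-1})`, where
`ωᵢ = 2 tan(Δθ/2) gᵢ / Lᵢ`, then the weighted curvatures satisfy
`ω̇ᵢ = (1/gᵢ)[ωᵢ² (ω_{i+1} - 2ωᵢ + ω_{i-1})/(2(1 - cos Δθ)) + ωᵢ³]`. -/
theorem stmt3 (N : ℕ) [NeZero N] (hN : 4 ≤ N) (Δθ : ℝ) (hΔθ : Δθ = 2 * π / N)
    (g : ZMod N → ℝ) (hg : ∀ i, 0 < g i)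
    (I : Set ℝ) (L L' : ℝ → ZMod N → ℝ) (ω : ℝ → ZMod N → ℝ)
    (hω : ∀ t i, ω t i = 2 * Real.tan (Δθ / 2) * g i / L t i)
    (hLpos : ∀ t ∈ I, ∀ i, 0 < L t i)
    (hL : ∀ t ∈ I, ∀ i, HasDerivAt (fun s => L s i) (L' t i) t)
    (hL' : ∀ t ∈ I, ∀ i, L' t i =
      2 * (Real.cos Δθ / Real.sin Δθ) * ω t i
        - (1 / Real.sin Δθ) * (ω t (i + 1) + ω t (i - 1))) :
    ∀ t ∈ I, ∀ i, HasDerivAt (fun s => ω s i)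
      ((1 / g i) * ((ω t i) ^ 2 * (ω t (i + 1) - 2 * ω t i + ω t (i - 1))
          / (2 * (1 - Real.cos Δθ)) + (ω t i) ^ 3)) t := by
  intro t ht i
  -- basic facts about Δθ
  have hNpos : (0 : ℝ) < N := by
    have := NeZero.pos N
    exact_mod_cast this
  have hθpos : 0 < Δθ := by
    rw [hΔθ]
    positivity
  have hθle : Δθ ≤ π / 2 := by
    rw [hΔθ, div_le_div_iff₀ hNpos (by norm_num)]
    have : (4 : ℝ) ≤ N := by exact_mod_cast hN
    nlinarith [Real.pi_pos]
  have h2pos : 0 < Δθ / 2 := by linarith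
  have h2lt : Δθ / 2 < π / 2 := by
    have := Real.pi_pos
    linarith
  have hc2 : 0 < Real.cos (Δθ / 2) := Real.cos_pos_of_mem_Ioo ⟨by linarith, h2lt⟩
  have hs2 : 0 < Real.sin (Δθ / 2) := Real.sin_pos_of_pos_of_lt_pi h2pos (by
    have := Real.pi_pos; linarith)
  have hsin : Real.sin Δθ = 2 * Real.sin (Δθ / 2) * Real.cos (Δθ / 2) := by
    have := Real.sin_two_mul (Δθ / 2)
    rw [show 2 * (Δθ / 2) = Δθ by ring] at this
    exact this
  have hcos : Real.cos Δθ = 1 - 2 * Real.sin (Δθ / 2) ^ 2 := by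
    have := Real.cos_two_mul' (Δθ / 2)
    rw [show 2 * (Δθ / 2) = Δθ by ring] at this
    have hpy := Real.sin_sq_add_cos_sq (Δθ / 2)
    rw [this]
    linarith
  have htan : Real.tan (Δθ / 2) = Real.sin (Δθ / 2) / Real.cos (Δθ / 2) :=
    Real.tan_eq_sin_div_cos _
  have hLt := hLpos t ht i
  have hLne : L t i ≠ 0 := ne_of_gt hLt
  have hgne : g i ≠ 0 := ne_of_gt (hg i)
  have hs2ne : Real.sin (Δθ / 2) ≠ 0 := ne_of_gt hs2
  have hc2ne : Real.cos (Δθ / 2) ≠ 0 := ne_of_gt hc2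
  have hd : HasDerivAt (fun s => ω s i)
      ((0 * L t i - 2 * Real.tan (Δθ / 2) * g i * L' t i) / (L t i) ^ 2) t := by
    have := (hasDerivAt_const t (2 * Real.tan (Δθ / 2) * g i)).div (hL t ht i) hLne
    refine HasDerivAt.congr_deriv (this.congr_of_eventuallyEq ?_) rfl
    filter_upwards with s
    rw [hω]
    rfl
  convert hd using 1
  rw [hL' t ht i, hω t i, hω t (i + 1), hω t (i - 1)]
  have hL1 := hLpos t ht (i + 1)
  have hL2 := hLpos t ht (i - 1)
  rw [htan, hsin, hcos]
  field_simp [htan, hsin, hcos]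
  ring
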